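/- Let A be a unital C*-algebra, let s ≥ 1 and n ≥ 1 be integers, and let u = (u_ij) be an n×n matrix over A satisfying the level-s cubic relations: u is unitary, the transpose u^t is unitary, each u_ij is normal, each p_ij = u_ij u_ij* is a projection, and u_ij^s = p_ij. Let l ≥ 1 and let j_1,…,j_l ≥ 1 be integers with s dividing j_1 + … + j_l. Then for all indices a_1,…,a_l ∈ {1,…,n}: Σ_{b=1}^n u_{a_1 b}^{j_1} u_{a_2 b}^{j_2} ⋯ u_{a_l b}^{j_l} equals 1 if a_1 = a_2 = … = a_l, and equals 0 otherwise. -/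

import Mathlib

/-- Projections in a C*-algebra summing to `1` are pairwise orthogonal. -/
lemma cubic_aux_proj_orth {A : Type*} [CStarAlgebra A] {ι : Type*} [Fintype ι] [DecidableEq ι]
    (p : ι → A) (hsa : ∀ i, star (p i) = p i) (hid : ∀ i, p i * p i = p i)
    (hsum : ∑ i, p i = 1) {i i' : ι} (hne : i ≠ i') : p i * p i' = 0 := by
  letI := CStarAlgebra.spectralOrder A
  letI := CStarAlgebra.spectralOrderedRing A
  have hnn : ∀ k, (0:A) ≤ p k := fun k => by
    have := star_mul_self_nonneg (p k); rwa [hsa, hid] at this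
  have hrest : (0:A) ≤ 1 - p i - p i' := by
    have h1 : ∑ k, p k = p i + ∑ k ∈ Finset.univ.erase i, p k :=
      (Finset.add_sum_erase _ p (Finset.mem_univ i)).symm
    have h2 : ∑ k ∈ Finset.univ.erase i, p k
        = p i' + ∑ k ∈ (Finset.univ.erase i).erase i', p k :=
      (Finset.add_sum_erase _ p (Finset.mem_erase.mpr ⟨hne.symm, Finset.mem_univ _⟩)).symm
    have h3 : (0:A) ≤ ∑ k ∈ (Finset.univ.erase i).erase i', p k :=
      Finset.sum_nonneg fun k _ => hnn k
    have : 1 - p i - p i' = ∑ k ∈ (Finset.univ.erase i).erase i', p k := by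
      rw [← hsum, h1, h2]; abel
    rwa [this]
  have hle : p i' ≤ 1 - p i := sub_nonneg.mp hrest
  have hconj := star_left_conjugate_le_conjugate hle (p i)
  rw [hsa] at hconj
  have hzero : p i * (1 - p i) * p i = 0 := by
    rw [mul_sub, mul_one, hid, sub_self, zero_mul]
  rw [hzero] at hconj
  have hmid : star (p i' * p i) * (p i' * p i) = p i * p i' * p i := by
    rw [star_mul, hsa, hsa, mul_assoc, ← mul_assoc (p i'), hid, ← mul_assoc]
  have hge : (0:A) ≤ p i * p i' * p i := by
    have := star_mul_self_nonneg (p i' * p i); rwa [hmid] at this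
  have heq : p i * p i' * p i = 0 := le_antisymm hconj hge
  have h0 : p i' * p i = 0 := by
    have hz : star (p i' * p i) * (p i' * p i) = 0 := by rw [hmid]; exact heq
    exact (CStarRing.star_mul_self_eq_zero_iff _).mp hz
  calc p i * p i' = star (p i' * p i) := by rw [star_mul, hsa, hsa]
    _ = 0 := by rw [h0, star_zero]

/-- A normal element whose range projection is idempotent is a partial isometry. -/
lemma cubic_aux_partial_isom {A : Type*} [CStarAlgebra A] (a : A)
    (hn : a * star a = star a * a)
    (hid : (a * star a) * (a * star a) = a * star a) :
    a * (a * star a) = a ∧ (a * star a) * a = a := by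
  have e1 : a * ((a * star a) * star a) = a * star a := by
    calc a * ((a * star a) * star a) = a * ((star a * a) * star a) := by rw [hn]
      _ = (a * star a) * (a * star a) := by noncomm_ring
      _ = a * star a := hid
  have e3 : (a * (a * star a)) * star a = a * star a := by
    rw [mul_assoc]; exact e1
  have e2 : (a * (a * star a)) * ((a * star a) * star a) = a * star a := by
    calc (a * (a * star a)) * ((a * star a) * star a)
        = a * (((a * star a) * (a * star a)) * star a) := by noncomm_ring
      _ = a * ((a * star a) * star a) := by rw [hid]
      _ = a * star a := e1
  have hx : (a - a * (a * star a)) * star (a - a * (a * star a)) = 0 := by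
    have hstar : star (a - a * (a * star a)) = star a - (a * star a) * star a := by
      rw [star_sub, star_mul, star_mul, star_star]
    rw [hstar, sub_mul, mul_sub, mul_sub, e1, e3, e2]
    abel
  have hxz : a - a * (a * star a) = 0 := by
    have h1 : star (star (a - a * (a * star a))) * star (a - a * (a * star a)) = 0 := by
      rwa [star_star]
    have h2 := (CStarRing.star_mul_self_eq_zero_iff (star (a - a * (a * star a)))).mp h1
    rwa [star_eq_zero] at h2
  have h1 : a * (a * star a) = a := (sub_eq_zero.mp hxz).symm
  refine ⟨h1, ?_⟩
  have hcomm : (a * star a) * a = a * (a * star a) := by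
    rw [mul_assoc, ← hn, ← mul_assoc]
  rw [hcomm, h1]

/-- List product lemma: a product `v i ^ (m+1) * ∏ v q.1 ^ q.2` collapses. -/
lemma cubic_aux_list {A : Type*} [Ring A] {n : ℕ} (v : Fin n → A)
    (horth : ∀ i i' : Fin n, i ≠ i' → ∀ m m' : ℕ, v i ^ (m+1) * v i' ^ (m'+1) = 0) :
    ∀ (L : List (Fin n × ℕ)) (i : Fin n) (m : ℕ), (∀ q ∈ L, 1 ≤ q.2) →
    v i ^ (m+1) * (L.map fun q => v q.1 ^ q.2).prod =
      if ∀ q ∈ L, q.1 = i then v i ^ (m + 1 + (L.map Prod.snd).sum) else 0 := by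
  intro L
  induction L with
  | nil => intro i m _; simp
  | cons q L ih =>
    intro i m hge
    obtain ⟨i', m'⟩ := q
    have hm' : 1 ≤ m' := hge _ (List.mem_cons_self)
    obtain ⟨m'', rfl⟩ : ∃ k, m' = k + 1 := ⟨m' - 1, by omega⟩
    by_cases hii : i' = i
    · subst hii
      simp only [List.map_cons, List.prod_cons, ← mul_assoc]
      rw [← pow_add]
      have harith : m + 1 + (m'' + 1) = (m + 1 + m'') + 1 := by ring
      rw [harith, ih i' (m + 1 + m'') (fun q hq => hge q (List.mem_cons_of_mem _ hq))]
      have hcond : (∀ q ∈ (i', m'' + 1) :: L, q.1 = i') ↔ (∀ q ∈ L, q.1 = i') := by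
        constructor
        · intro h q hq; exact h q (List.mem_cons_of_mem _ hq)
        · intro h q hq
          rcases List.mem_cons.mp hq with h1 | h1
          · rw [h1]
          · exact h q h1
      by_cases hc : ∀ q ∈ L, q.1 = i'
      · rw [if_pos hc, if_pos (hcond.mpr hc), List.sum_cons]
        congr 1; omega
      · rw [if_neg hc, if_neg (fun h => hc (hcond.mp h))]
    · simp only [List.map_cons, List.prod_cons, ← mul_assoc]
      rw [horth i i' (fun h => hii h.symm) m m'', zero_mul]
      have hnc : ¬ ∀ q ∈ (i', m'' + 1) :: L, q.1 = i := by
        intro h; exact hii (h (i', m'' + 1) (List.mem_cons_self))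
      rw [if_neg hnc]

/-- for a matrix `u` over a unital C*-algebra satisfying the level-`s`
cubic relations, and exponents `j_1, …, j_l ≥ 1` whose sum is divisible by `s`,
the sum `Σ_b u_{a_1 b}^{j_1} ⋯ u_{a_l b}^{j_l}` equals `1` if `a_1 = ⋯ = a_l`
and `0` otherwise. -/
theorem cubic_fixed_vector_computation {A : Type*} [CStarAlgebra A]
    (s n : ℕ) (hs : 1 ≤ s) (hn : 1 ≤ n) (u : Fin n → Fin n → A)
    (hU1 : ∀ i j, ∑ k, u i k * star (u j k) = if i = j then 1 else 0)
    (hU2 : ∀ i j, ∑ k, star (u k i) * u k j = if i = j then 1 else 0)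
    (hT1 : ∀ i j, ∑ k, u k i * star (u k j) = if i = j then 1 else 0)
    (hT2 : ∀ i j, ∑ k, star (u i k) * u j k = if i = j then 1 else 0)
    (hnormal : ∀ i j, u i j * star (u i j) = star (u i j) * u i j)
    (hproj : ∀ i j, star (u i j * star (u i j)) = u i j * star (u i j) ∧
      (u i j * star (u i j)) * (u i j * star (u i j)) = u i j * star (u i j))
    (hpow : ∀ i j, u i j ^ s = u i j * star (u i j))
    (l : ℕ) (hl : 1 ≤ l) (j : Fin l → ℕ) (hj : ∀ r, 1 ≤ j r)
    (hdiv : s ∣ ∑ r, j r) (a : Fin l → Fin n) :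
    ∑ b : Fin n, (List.ofFn fun r : Fin l => u (a r) b ^ j r).prod =
      if ∀ r r' : Fin l, a r = a r' then 1 else 0 := by
  obtain ⟨l', rfl⟩ : ∃ k, l = k + 1 := ⟨l - 1, by omega⟩
  have horthP : ∀ (b : Fin n) (i i' : Fin n), i ≠ i' →
      (u i b * star (u i b)) * (u i' b * star (u i' b)) = 0 := by
    intro b i i' hne
    refine cubic_aux_proj_orth (fun k => u k b * star (u k b))
      (fun k => (hproj k b).1) (fun k => (hproj k b).2) ?_ hne
    have := hT1 b b; simpa using this
  have hup : ∀ i b, u i b * (u i b * star (u i b)) = u i b :=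
    fun i b => (cubic_aux_partial_isom (u i b) (hnormal i b) (hproj i b).2).1
  have hpu : ∀ i b, (u i b * star (u i b)) * u i b = u i b :=
    fun i b => (cubic_aux_partial_isom (u i b) (hnormal i b) (hproj i b).2).2
  have key : ∀ (b i i' : Fin n), i ≠ i' → ∀ m m' : ℕ,
      u i b ^ (m+1) * u i' b ^ (m'+1) = 0 := by
    intro b i i' hne m m'
    have h1 : u i b ^ (m+1) * (u i b * star (u i b)) = u i b ^ (m+1) := by
      rw [pow_succ, mul_assoc, hup]
    have h2 : (u i' b * star (u i' b)) * u i' b ^ (m'+1) = u i' b ^ (m'+1) := by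
      rw [pow_succ', ← mul_assoc, hpu]
    calc u i b ^ (m+1) * u i' b ^ (m'+1)
        = (u i b ^ (m+1) * (u i b * star (u i b))) *
          ((u i' b * star (u i' b)) * u i' b ^ (m'+1)) := by rw [h1, h2]
      _ = u i b ^ (m+1) *
          (((u i b * star (u i b)) * (u i' b * star (u i' b))) * u i' b ^ (m'+1)) := by
          rw [mul_assoc, ← mul_assoc (u i b * star (u i b))]
      _ = 0 := by rw [horthP b i i' hne, zero_mul, mul_zero]
  obtain ⟨m0, hm0⟩ : ∃ k, j 0 = k + 1 := ⟨j 0 - 1, by have := hj 0; omega⟩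
  have hlist : ∀ b : Fin n,
      (List.ofFn fun r : Fin (l'+1) => u (a r) b ^ j r).prod =
        if ∀ r : Fin l', a r.succ = a 0 then u (a 0) b ^ (∑ r, j r) else 0 := by
    intro b
    rw [List.ofFn_succ]
    have htail : (List.ofFn fun r : Fin l' => u (a r.succ) b ^ j r.succ)
        = (List.ofFn fun r : Fin l' => (a r.succ, j r.succ)).map
            (fun q => u q.1 b ^ q.2) := by
      rw [List.map_ofFn]; rfl
    rw [List.prod_cons, htail, hm0]
    rw [cubic_aux_list (fun i => u i b) (key b) _ (a 0) m0 ?hge]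
    case hge =>
      intro q hq
      rw [List.mem_ofFn] at hq
      obtain ⟨r, rfl⟩ := hq
      exact hj r.succ
    have hcond : (∀ q ∈ List.ofFn fun r : Fin l' => (a r.succ, j r.succ), q.1 = a 0)
        ↔ (∀ r : Fin l', a r.succ = a 0) := by
      constructor
      · intro h r; exact h (a r.succ, j r.succ) (by rw [List.mem_ofFn]; exact ⟨r, rfl⟩)
      · intro h q hq; rw [List.mem_ofFn] at hq; obtain ⟨r, rfl⟩ := hq; exact h r
    have hsum : m0 + 1 + ((List.ofFn fun r : Fin l' => (a r.succ, j r.succ)).map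
        Prod.snd).sum = ∑ r, j r := by
      rw [List.map_ofFn]
      rw [show ((Prod.snd ∘ fun r : Fin l' => (a r.succ, j r.succ)))
        = fun r : Fin l' => j r.succ from rfl]
      rw [List.sum_ofFn, Fin.sum_univ_succ, ← hm0]
    by_cases hc : ∀ r : Fin l', a r.succ = a 0
    · rw [if_pos (hcond.mpr hc), if_pos hc, hsum]
    · rw [if_neg (fun h => hc (hcond.mp h)), if_neg hc]
  simp only [hlist]
  by_cases hc : ∀ r r' : Fin (l'+1), a r = a r'
  · have hc' : ∀ r : Fin l', a r.succ = a 0 := fun r => hc r.succ 0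
    rw [if_pos hc]
    simp only [if_pos hc']
    obtain ⟨m, hm⟩ := hdiv
    have hpos : 0 < ∑ r : Fin (l'+1), j r :=
      lt_of_lt_of_le (hj 0) (Finset.single_le_sum (fun r _ => Nat.zero_le _) (Finset.mem_univ 0))
    have hm1 : m ≠ 0 := by rintro rfl; rw [Nat.mul_zero] at hm; omega
    obtain ⟨m', rfl⟩ : ∃ k, m = k + 1 := ⟨m - 1, by omega⟩
    have hidem : ∀ (x : A), x * x = x → ∀ k : ℕ, x ^ (k+1) = x := by
      intro x hx k
      induction k with
      | zero => simp
      | succ k ih => rw [pow_succ, ih, hx]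
    have hppow : ∀ b, u (a 0) b ^ (∑ r, j r) = u (a 0) b * star (u (a 0) b) := by
      intro b
      rw [hm, pow_mul, hpow]
      exact hidem _ ((hproj (a 0) b).2) m'
    simp only [hppow]
    have := hU1 (a 0) (a 0); simpa using this
  · have hc' : ¬ ∀ r : Fin l', a r.succ = a 0 := by
      intro h
      apply hc
      have hall : ∀ r : Fin (l'+1), a r = a 0 := fun r =>
        Fin.cases rfl (fun r' => h r') r
      intro r r'; rw [hall r, hall r']
    rw [if_neg hc]
    simp [hc']
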